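/- Consider the layered Hamiltonian H_δ(σ) = −Σ_{k=1}^{L} δ^{k−1} ⟨σ^{(k)}, b^{(k)} + W^{(k)}σ^{(k−1)}⟩ on states σ = (σ^{(0)},…,σ^{(L)}) with σ^{(k)} ∈ {−1,1}^{M_k}, and fix σ^{(0)}. Define the forward pass σ*^{(k)} = sign(W^{(k)}σ*^{(k−1)} + b^{(k)}) with σ*^{(0)} = σ^{(0)}, and assume no preactivation coordinate (W^{(k)}σ*^{(k−1)} + b^{(k)})_j is zero. Let K₁ = min_{k,j} |(b^{(k)} + W^{(k)}σ*^{(k−1)})_j| > 0 and K₀ = max_{k, v ∈ {−1,1}^{M_{k−1}}} ‖b^{(k)} + W^{(k)}v‖₁. Then for every 0 < δ ≤ K₁/(K₀ + K₁), the state (σ*^{(1)},…,σ*^{(L)}) is the unique minimizer of H_δ(σ^{(0)}, ·) over all (σ^{(1)},…,σ^{(L)}) ∈ ∏_k {−1,1}^{M_k}. -/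

import Mathlib

theorem forward_pass_is_unique_ground_state
    (L : ℕ) (hL : 1 ≤ L) (M : ℕ → ℕ)
    (W : (k : ℕ) → Matrix (Fin (M (k + 1))) (Fin (M k)) ℝ)
    (b : (k : ℕ) → Fin (M (k + 1)) → ℝ)
    (σstar : (k : ℕ) → Fin (M k) → ℝ)
    (hσ0 : ∀ i, σstar 0 i = 1 ∨ σstar 0 i = -1)
    (hpre : ∀ k < L, ∀ i, (b k i + ∑ j, W k i j * σstar k j) ≠ 0)
    (hfwd : ∀ k < L, ∀ i,
      σstar (k + 1) i = Real.sign (b k i + ∑ j, W k i j * σstar k j))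
    (K₁ : ℝ) (hK₁pos : 0 < K₁)
    (hK₁ : ∀ k < L, ∀ i, K₁ ≤ |b k i + ∑ j, W k i j * σstar k j|)
    (K₀ : ℝ)
    (hK₀ : ∀ k < L, ∀ v : Fin (M k) → ℝ, (∀ j, v j = 1 ∨ v j = -1) →
      (∑ i, |b k i + ∑ j, W k i j * v j|) ≤ K₀)
    (δ : ℝ) (hδ0 : 0 < δ) (hδ : δ ≤ K₁ / (K₀ + K₁))
    (H : ((k : ℕ) → Fin (M k) → ℝ) → ℝ)
    (hH : ∀ s, H s = -(∑ k ∈ Finset.range L,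
      δ ^ k * ∑ i, s (k + 1) i * (b k i + ∑ j, W k i j * s k j))) :
    ∀ τ : (k : ℕ) → Fin (M k) → ℝ,
      (∀ k ≤ L, ∀ i, τ k i = 1 ∨ τ k i = -1) →
      τ 0 = σstar 0 →
      ¬(∀ k ≤ L, τ k = σstar k) →
      H σstar < H τ := by
  intro τ hτ hτ0 hne
  classical
  -- σstar takes ±1 values
  have hσpm : ∀ k, k ≤ L → ∀ i, σstar k i = 1 ∨ σstar k i = -1 := by
    intro k hk i
    match k with
    | 0 => exact hσ0 i
    | (k+1) =>
      rw [hfwd k (by omega) i]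
      rcases lt_or_gt_of_ne (hpre k (by omega) i) with h | h
      · right; exact Real.sign_of_neg h
      · left; exact Real.sign_of_pos h
  -- sign property
  have hsign : ∀ k, k < L → ∀ i,
      σstar (k+1) i * (b k i + ∑ j, W k i j * σstar k j)
        = |b k i + ∑ j, W k i j * σstar k j| := by
    intro k hk i
    rw [hfwd k hk i]
    rcases lt_or_gt_of_ne (hpre k hk i) with h | h
    · rw [Real.sign_of_neg h, abs_of_neg h]; ring
    · rw [Real.sign_of_pos h, abs_of_pos h]; ring
  have hK₀0 : 0 ≤ K₀ :=
    le_trans (Finset.sum_nonneg fun i _ => abs_nonneg _) (hK₀ 0 hL (σstar 0) hσ0)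
  have hδK : δ * (K₀ + K₁) ≤ K₁ := by
    rw [← le_div_iff₀ (by positivity)]; exact hδ
  have hKδ : K₀ * δ ≤ K₁ * (1 - δ) := by nlinarith
  -- minimal differing layer
  push_neg at hne
  obtain ⟨m, hmL, hmτ, hmin⟩ : ∃ m, m + 1 ≤ L ∧ τ (m + 1) ≠ σstar (m + 1) ∧
      ∀ k, k ≤ m → τ k = σstar k := by
    have hspec := Nat.find_spec hne
    have h1 : Nat.find hne ≠ 0 := by
      intro h0
      rw [h0] at hspec
      exact hspec.2 hτ0
    have hfL : Nat.find hne ≤ L := hspec.1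
    refine ⟨Nat.find hne - 1, by omega, ?_, ?_⟩
    · have hh : Nat.find hne - 1 + 1 = Nat.find hne := by omega
      rw [hh]; exact hspec.2
    · intro k hk
      by_contra hc
      exact Nat.find_min hne (by omega) ⟨by omega, hc⟩
  -- splitting lemma
  have hsplit : ∀ s : (k : ℕ) → Fin (M k) → ℝ,
      ∑ k ∈ Finset.range L, δ ^ k * ∑ i, s (k+1) i * (b k i + ∑ j, W k i j * s k j)
      = (∑ k ∈ Finset.range m, δ ^ k * ∑ i, s (k+1) i * (b k i + ∑ j, W k i j * s k j))
        + δ ^ m * (∑ i, s (m+1) i * (b m i + ∑ j, W m i j * s m j))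
        + ∑ k ∈ Finset.Ico (m+1) L, δ ^ k * ∑ i, s (k+1) i * (b k i + ∑ j, W k i j * s k j) := by
    intro s
    rw [← Finset.sum_range_add_sum_Ico _ hmL, Finset.sum_range_succ]
  -- e1 : agreement below m
  have e1 : (∑ k ∈ Finset.range m, δ ^ k * ∑ i, τ (k+1) i * (b k i + ∑ j, W k i j * τ k j))
      = ∑ k ∈ Finset.range m, δ ^ k * ∑ i, σstar (k+1) i * (b k i + ∑ j, W k i j * σstar k j) := by
    refine Finset.sum_congr rfl fun k hk => ?_
    have hk' := Finset.mem_range.mp hk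
    rw [hmin k (by omega), hmin (k+1) (by omega)]
  -- difference lemma at layer m
  have hdiff : ∀ i, τ (m+1) i ≠ σstar (m+1) i →
      (σstar (m+1) i - τ (m+1) i) * (b m i + ∑ j, W m i j * σstar m j)
        = 2 * |b m i + ∑ j, W m i j * σstar m j| := by
    intro i hnei
    have h1 := hsign m hmL i
    rcases hσpm (m+1) (by omega) i with h2 | h2 <;>
      rcases hτ (m+1) (by omega) i with h3 | h3
    · exact absurd (h3.trans h2.symm) hnei
    · rw [h2] at h1 ⊢; rw [h3]; linarith
    · rw [h2] at h1 ⊢; rw [h3]; linarith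
    · exact absurd (h3.trans h2.symm) hnei
  have hnn : ∀ i, (0:ℝ) ≤ (σstar (m+1) i - τ (m+1) i) * (b m i + ∑ j, W m i j * σstar m j) := by
    intro i
    by_cases h : τ (m+1) i = σstar (m+1) i
    · rw [h, sub_self, zero_mul]
    · rw [hdiff i h]; positivity
  have hmain : 2 * K₁ ≤ ∑ i, (σstar (m+1) i - τ (m+1) i) * (b m i + ∑ j, W m i j * σstar m j) := by
    obtain ⟨i₀, hi₀⟩ := Function.ne_iff.mp hmτ
    calc 2 * K₁ ≤ 2 * |b m i₀ + ∑ j, W m i₀ j * σstar m j| := by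
          have := hK₁ m hmL i₀; linarith
      _ = (σstar (m+1) i₀ - τ (m+1) i₀) * (b m i₀ + ∑ j, W m i₀ j * σstar m j) :=
          (hdiff i₀ hi₀).symm
      _ ≤ _ := Finset.single_le_sum (fun i _ => hnn i) (Finset.mem_univ i₀)
  have hmain' : (∑ i, τ (m+1) i * (b m i + ∑ j, W m i j * σstar m j))
      ≤ (∑ i, σstar (m+1) i * (b m i + ∑ j, W m i j * σstar m j)) - 2 * K₁ := by
    have h := hmain
    rw [show (∑ i, (σstar (m+1) i - τ (m+1) i) * (b m i + ∑ j, W m i j * σstar m j))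
        = (∑ i, σstar (m+1) i * (b m i + ∑ j, W m i j * σstar m j))
          - ∑ i, τ (m+1) i * (b m i + ∑ j, W m i j * σstar m j) by
      rw [← Finset.sum_sub_distrib]
      exact Finset.sum_congr rfl fun i _ => by ring] at h
    linarith
  have e2 : δ ^ m * (∑ i, τ (m+1) i * (b m i + ∑ j, W m i j * σstar m j))
      ≤ δ ^ m * (∑ i, σstar (m+1) i * (b m i + ∑ j, W m i j * σstar m j))
        - 2 * K₁ * δ ^ m := by
    have hp : (0:ℝ) ≤ δ ^ m := pow_nonneg hδ0.le m
    nlinarith [mul_le_mul_of_nonneg_left hmain' hp]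
  -- e3 : bound on later layers
  have e3 : (∑ k ∈ Finset.Ico (m+1) L, δ ^ k * ∑ i, τ (k+1) i * (b k i + ∑ j, W k i j * τ k j))
      ≤ (∑ k ∈ Finset.Ico (m+1) L, δ ^ k * ∑ i, σstar (k+1) i * (b k i + ∑ j, W k i j * σstar k j))
        + K₀ * ∑ k ∈ Finset.Ico (m+1) L, δ ^ k := by
    rw [Finset.mul_sum, ← Finset.sum_add_distrib]
    refine Finset.sum_le_sum fun k hk => ?_
    obtain ⟨hk1, hk2⟩ := Finset.mem_Ico.mp hk
    have hτle : (∑ i, τ (k+1) i * (b k i + ∑ j, W k i j * τ k j)) ≤ K₀ := by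
      calc (∑ i, τ (k+1) i * (b k i + ∑ j, W k i j * τ k j))
          ≤ ∑ i, |b k i + ∑ j, W k i j * τ k j| := by
            refine Finset.sum_le_sum fun i _ => ?_
            rcases hτ (k+1) (by omega) i with h | h <;> rw [h]
            · rw [one_mul]; exact le_abs_self _
            · rw [neg_one_mul]; exact neg_le_abs _
        _ ≤ K₀ := hK₀ k hk2 (τ k) (fun j => hτ k (by omega) j)
    have hσge : (0:ℝ) ≤ ∑ i, σstar (k+1) i * (b k i + ∑ j, W k i j * σstar k j) := by
      refine Finset.sum_nonneg fun i _ => ?_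
      rw [hsign k hk2 i]; exact abs_nonneg _
    have hp : (0:ℝ) ≤ δ ^ k := pow_nonneg hδ0.le k
    nlinarith [mul_le_mul_of_nonneg_left hτle hp, mul_nonneg hp hσge]
  -- e4 : geometric bound
  have e4 : K₀ * (∑ k ∈ Finset.Ico (m+1) L, δ ^ k) ≤ K₁ * δ ^ m := by
    have hgeo : (∑ k ∈ Finset.Ico (m+1) L, δ ^ k)
        = δ ^ (m+1) * ∑ j ∈ Finset.range (L - (m+1)), δ ^ j := by
      rw [Finset.sum_Ico_eq_sum_range, Finset.mul_sum]
      exact Finset.sum_congr rfl fun j _ => by rw [← pow_add]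
    rw [hgeo]
    have hS : (0:ℝ) ≤ ∑ j ∈ Finset.range (L - (m+1)), δ ^ j :=
      Finset.sum_nonneg fun j _ => pow_nonneg hδ0.le j
    have hgs : (1 - δ) * (∑ j ∈ Finset.range (L - (m+1)), δ ^ j)
        = 1 - δ ^ (L - (m+1)) := by
      linear_combination -(geom_sum_mul δ (L - (m+1)))
    have hδn : (0:ℝ) ≤ δ ^ (L - (m+1)) := pow_nonneg hδ0.le _
    have hp : (0:ℝ) ≤ δ ^ m := pow_nonneg hδ0.le m
    have h5 : K₀ * δ * (∑ j ∈ Finset.range (L - (m+1)), δ ^ j)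
        ≤ K₁ * ((1 - δ) * (∑ j ∈ Finset.range (L - (m+1)), δ ^ j)) := by
      nlinarith [mul_le_mul_of_nonneg_right hKδ hS]
    rw [hgs] at h5
    have h6 : K₀ * δ * (∑ j ∈ Finset.range (L - (m+1)), δ ^ j) ≤ K₁ := by nlinarith
    have h7 := mul_le_mul_of_nonneg_left h6 hp
    calc K₀ * (δ ^ (m+1) * ∑ j ∈ Finset.range (L - (m+1)), δ ^ j)
        = δ ^ m * (K₀ * δ * ∑ j ∈ Finset.range (L - (m+1)), δ ^ j) := by ring
      _ ≤ δ ^ m * K₁ := h7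
      _ = K₁ * δ ^ m := by ring
  have e5 : (0:ℝ) < K₁ * δ ^ m := by positivity
  -- conclude
  rw [hH σstar, hH τ, neg_lt_neg_iff, hsplit σstar, hsplit τ, hmin m le_rfl]
  linarith [e1, e2, e3, e4, e5]
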